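/- Assume 2^κ = κ⁺. Then there exists a strongly 𝓒-independent family on κ⁺ of cardinality κ: a family 𝓘 ⊆ 𝒫(κ⁺) with |𝓘| = κ such that every Boolean combination of length < κ⁺ of 𝓘 is stationary in κ⁺. -/

import Mathlib

open Cardinal

/-- `C` is a club (closed unbounded) subset of the ordinal `o`. -/
def IsClubIn (C : Set Ordinal) (o : Ordinal) : Prop :=
  C ⊆ Set.Iio o ∧ (∀ a < o, ∃ b ∈ C, a ≤ b) ∧
    (∀ a < o, a ≠ 0 → (∀ b < a, ∃ c ∈ C, b < c ∧ c < a) → a ∈ C)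

/-- `S` is a stationary subset of the ordinal `o`: it meets every club in `o`. -/
def IsStationaryIn (S : Set Ordinal) (o : Ordinal) : Prop :=
  S ⊆ Set.Iio o ∧ ∀ C, IsClubIn C o → (S ∩ C).Nonempty


lemma isClubIn_Iio (o : Ordinal) : IsClubIn (Set.Iio o) o :=
  ⟨le_refl _, fun a ha => ⟨a, ha, le_refl a⟩, fun a ha _ _ => ha⟩

lemma isClubIn_tail {o : Ordinal} (holim : Order.IsSuccLimit o) {β : Ordinal} (hβ : β < o) :
    IsClubIn {ξ | β < ξ ∧ ξ < o} o := by
  refine ⟨fun x hx => hx.2, fun a ha => ?_, fun a ha h0 hcl => ?_⟩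
  · exact ⟨max (β + 1) a, ⟨lt_of_lt_of_le (Order.lt_succ β) (le_max_left _ _),
      max_lt (holim.succ_lt hβ) ha⟩, le_max_right _ _⟩
  · obtain ⟨c, hc, _, hca⟩ := hcl 0 (pos_iff_ne_zero.mpr h0)
    exact ⟨hc.1.trans hca, ha⟩

lemma isClubIn_iInter {o : Ordinal.{0}} (holim : Order.IsSuccLimit o) (hcof : ℵ₀ < o.cof)
    {ι : Type} [Nonempty ι] (hι : #ι < o.cof) {C : ι → Set Ordinal}
    (hC : ∀ i, IsClubIn (C i) o) : IsClubIn (⋂ i, C i) o := by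
  have hsub : (⋂ i, C i) ⊆ Set.Iio o :=
    (Set.iInter_subset _ (Classical.arbitrary ι)).trans (hC _).1
  refine ⟨hsub, fun a ha => ?_, fun a ha h0 hcl => ?_⟩
  · -- unboundedness
    have he : ∀ i, ∀ x < o, ∃ y, y ∈ C i ∧ x < y ∧ y < o := by
      intro i x hx
      obtain ⟨b, hb, hxb⟩ := (hC i).2.1 (x + 1) (holim.succ_lt hx)
      exact ⟨b, hb, lt_of_lt_of_le (Order.lt_succ x) hxb, (hC i).1 hb⟩
    choose! e he1 he2 he3 using he
    set b : ℕ → Ordinal := fun n => Nat.rec a (fun _ prev => ⨆ i, e i prev) n with hbdef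
    have hb0 : b 0 = a := rfl
    have hbsucc : ∀ n, b (n + 1) = ⨆ i, e i (b n) := fun n => rfl
    have hblt : ∀ n, b n < o := by
      intro n; induction n with
      | zero => exact ha
      | succ n ih =>
        rw [hbsucc]
        exact Ordinal.iSup_lt_ord hι (fun i => he3 i (b n) ih)
    have hbmono : ∀ n, b n < b (n + 1) := by
      intro n
      have i0 := Classical.arbitrary ι
      calc b n < e i0 (b n) := he2 i0 (b n) (hblt n)
        _ ≤ ⨆ i, e i (b n) := Ordinal.le_iSup _ i0
    set δ : Ordinal := ⨆ n, b n with hδ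
    have hδlt : δ < o := by
      apply Ordinal.iSup_lt_ord _ hblt
      rwa [Cardinal.mk_nat]
    have hbleδ : ∀ n, b n ≤ δ := Ordinal.le_iSup _
    have haδ : a < δ := lt_of_lt_of_le (hb0 ▸ hbmono 0) (hbleδ 1)
    have hδ0 : δ ≠ 0 := fun h => by simp [h] at haδ
    have hmem : δ ∈ ⋂ i, C i := by
      refine Set.mem_iInter.mpr fun i => (hC i).2.2 δ hδlt hδ0 fun x hx => ?_
      obtain ⟨n, hn⟩ := Ordinal.lt_iSup_iff.mp hx
      refine ⟨e i (b n), he1 i (b n) (hblt n), hn.trans (he2 i (b n) (hblt n)), ?_⟩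
      calc e i (b n) ≤ ⨆ j, e j (b n) := Ordinal.le_iSup _ i
        _ = b (n + 1) := (hbsucc n).symm
        _ < b (n + 2) := hbmono (n + 1)
        _ ≤ δ := hbleδ (n + 2)
    exact ⟨δ, hmem, haδ.le⟩
  · -- closedness
    refine Set.mem_iInter.mpr fun i => (hC i).2.2 a ha h0 fun x hx => ?_
    obtain ⟨c, hc, hxc, hca⟩ := hcl x hx
    exact ⟨c, Set.mem_iInter.mp hc i, hxc, hca⟩

lemma IsClubIn.isStationaryIn {o : Ordinal.{0}} (holim : Order.IsSuccLimit o) (hcof : ℵ₀ < o.cof)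
    {C : Set Ordinal} (hC : IsClubIn C o) : IsStationaryIn C o := by
  refine ⟨hC.1, fun D hD => ?_⟩
  have : IsClubIn (⋂ b : Bool, (if b then C else D)) o := by
    refine isClubIn_iInter holim hcof ?_ fun b => ?_
    · exact lt_trans (Cardinal.lt_aleph0_of_finite Bool) hcof
    · cases b <;> simpa
  obtain ⟨x, hx, -⟩ := this.2.1 0 holim.pos
  have hxC := Set.mem_iInter.mp hx true
  have hxD := Set.mem_iInter.mp hx false
  simp only [if_true, if_false] at hxC hxD
  exact ⟨x, hxC, hxD⟩

lemma IsStationaryIn.mono {o : Ordinal.{0}} {S T : Set Ordinal} (hS : IsStationaryIn S o)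
    (hST : S ⊆ T) (hT : T ⊆ Set.Iio o) : IsStationaryIn T o :=
  ⟨hT, fun C hC => (hS.2 C hC).mono (Set.inter_subset_inter_left _ hST)⟩

lemma exists_stationary_of_union {o : Ordinal.{0}} (holim : Order.IsSuccLimit o) (hcof : ℵ₀ < o.cof)
    {ι : Type} [Nonempty ι] (hι : #ι < o.cof) {A : ι → Set Ordinal} {T : Set Ordinal}
    (hT : IsStationaryIn T o) (hTA : T ⊆ ⋃ i, A i) :
    ∃ i, IsStationaryIn (A i ∩ Set.Iio o) o := by
  by_contra h
  push_neg at h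
  have h' : ∀ i, ∃ C, IsClubIn C o ∧ (A i ∩ Set.Iio o ∩ C) = ∅ := by
    intro i
    have := h i
    unfold IsStationaryIn at this
    push_neg at this
    obtain ⟨C, hC, hCne⟩ := this Set.inter_subset_right
    exact ⟨C, hC, hCne⟩
  choose C hC hCA using h'
  obtain ⟨x, hxT, hxC⟩ := hT.2 _ (isClubIn_iInter holim hcof hι hC)
  obtain ⟨i, hi⟩ := Set.mem_iUnion.mp (hTA hxT)
  exact Set.eq_empty_iff_forall_notMem.mp (hCA i) x
    ⟨⟨hi, hT.1 hxT⟩, Set.mem_iInter.mp hxC i⟩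

lemma ulam_family (κ : Cardinal.{0}) (hκ : ℵ₀ ≤ κ) (ι : Type) (hι : #ι ≤ Order.succ κ) :
    ∃ S : ι → Set Ordinal.{0}, (∀ g, IsStationaryIn (S g) (Order.succ κ).ord) ∧
      ∀ g g', g ≠ g' → S g ∩ S g' = ∅ := by
  set o : Ordinal.{0} := (Order.succ κ).ord with ho
  have hreg : (Order.succ κ).IsRegular := Cardinal.isRegular_succ hκ
  have hcofo : o.cof = Order.succ κ := hreg.cof_eq
  have holim : Order.IsSuccLimit o := Cardinal.isSuccLimit_ord (hκ.trans (Order.le_succ κ))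
  have hcof : ℵ₀ < o.cof := by rw [hcofo]; exact hκ.trans_lt (Order.lt_succ κ)
  have hκo : κ < o.cof := by rw [hcofo]; exact Order.lt_succ κ
  -- injections into κ.ord
  have hFex : ∀ ξ : Ordinal.{0}, ξ < o → ∃ F : Ordinal → Ordinal,
      (∀ β < ξ, F β < κ.ord) ∧ ∀ β < ξ, ∀ β' < ξ, F β = F β' → β = β' := by
    intro ξ hξ
    have hcard : ξ.card ≤ κ := Order.lt_succ_iff.mp (Cardinal.lt_ord.mp hξ)
    have hle : #(Set.Iio ξ) ≤ #(Set.Iio κ.ord) := by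
      rw [Ordinal.mk_Iio_ordinal, Ordinal.mk_Iio_ordinal, Cardinal.card_ord]
      exact Cardinal.lift_le.mpr hcard
    obtain ⟨j⟩ := (Cardinal.le_def _ _).mp hle
    refine ⟨fun β => if h : β < ξ then (j ⟨β, h⟩ : Set.Iio κ.ord).1 else 0,
      fun β hβ => ?_, fun β hβ β' hβ' heq => ?_⟩
    · simpa only [dif_pos hβ, Set.mem_Iio] using (j ⟨β, hβ⟩).2
    · simp only [dif_pos hβ, dif_pos hβ'] at heq
      have := j.injective (Subtype.ext heq)
      exact congrArg Subtype.val this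
  choose! F hF1 hF2 using hFex
  -- the matrix
  have hκ0 : κ.ord ≠ 0 := by
    intro h
    have hz : κ = 0 := by rw [← Cardinal.card_ord κ, h, Ordinal.card_zero]
    rw [hz] at hκ
    simp at hκ
    exact Cardinal.aleph0_ne_zero hκ
  haveI : Nonempty κ.ord.ToType := Ordinal.nonempty_toType_iff.mpr hκ0
  have hmkt : #κ.ord.ToType = κ := by rw [Cardinal.mk_toType, Cardinal.card_ord]
  set val : κ.ord.ToType → Ordinal := fun η => ((Ordinal.ToType.mk (o := κ.ord)).symm η : Set.Iio κ.ord).1 with hval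
  set A : κ.ord.ToType → Ordinal → Set Ordinal :=
    fun η β => {ξ | β < ξ ∧ ξ < o ∧ F ξ β = val η} with hA
  -- step 1
  have step1 : ∀ β : Set.Iio o, ∃ η, IsStationaryIn (A η β.1 ∩ Set.Iio o) o := by
    rintro ⟨β, hβ⟩
    refine exists_stationary_of_union holim hcof (by rw [hmkt]; exact hκo)
      ((isClubIn_tail holim hβ).isStationaryIn holim hcof) ?_
    rintro ξ ⟨hβξ, hξo⟩
    have hfv : F ξ β < κ.ord := hF1 ξ hξo β hβξ
    refine Set.mem_iUnion.mpr ⟨Ordinal.ToType.mk (o := κ.ord) ⟨F ξ β, hfv⟩, hβξ, hξo, ?_⟩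
    simp [hval]
  choose G hG using step1
  -- step 2 : pigeonhole
  have step2 : ∃ η, Cardinal.lift.{1} (Order.succ κ) ≤ #(G ⁻¹' {η}) := by
    by_contra h
    push_neg at h
    have hfib : ∀ η, #(G ⁻¹' {η}) ≤ Cardinal.lift.{1} κ := by
      intro η
      have := h η
      rw [Cardinal.lift_succ] at this
      exact Order.lt_succ_iff.mp this
    have hdom : #(Set.Iio o) = Cardinal.lift.{1} (Order.succ κ) := by
      rw [Ordinal.mk_Iio_ordinal, Cardinal.card_ord]
    have : #(Set.Iio o) ≤ Cardinal.lift.{1} κ := by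
      calc #(Set.Iio o) = #(Σ η, G ⁻¹' {η}) := (Cardinal.mk_congr (Equiv.sigmaFiberEquiv G)).symm
        _ = Cardinal.sum (fun η => #(G ⁻¹' {η})) := Cardinal.mk_sigma _
        _ ≤ Cardinal.sum (fun _ : κ.ord.ToType => Cardinal.lift.{1} κ) := Cardinal.sum_le_sum _ _ hfib
        _ = Cardinal.lift.{1} κ * Cardinal.lift.{1} κ := by
              rw [Cardinal.sum_const]; simp [hmkt]
        _ = Cardinal.lift.{1} κ := Cardinal.mul_eq_self (Cardinal.aleph0_le_lift.mpr hκ)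
    rw [hdom] at this
    exact absurd (Cardinal.lift_lt.mp ((Cardinal.lift_lt.mpr (Order.lt_succ κ)).trans_le this)) (lt_irrefl κ)
  obtain ⟨η, hη⟩ := step2
  -- embedding of ι into the fiber
  have hemb : Nonempty (ι ↪ (G ⁻¹' {η})) := by
    rw [← Cardinal.lift_mk_le']
    have := (Cardinal.lift_le.mpr hι).trans hη
    simpa using this
  obtain ⟨emb⟩ := hemb
  set βg : ι → Set.Iio o := fun g => ((emb g : G ⁻¹' {η}) : Set.Iio o) with hβg
  refine ⟨fun g => A η (βg g).1 ∩ Set.Iio o, fun g => ?_, fun g g' hne => ?_⟩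
  · have h2 : G (βg g) = η := (emb g).2
    have := hG (βg g)
    rw [h2] at this
    exact this
  · ext ξ
    simp only [Set.mem_inter_iff, Set.mem_empty_iff_false, iff_false]
    rintro ⟨⟨⟨h1, h2, h3⟩, -⟩, ⟨⟨h1', h2', h3'⟩, -⟩⟩
    have : (βg g : Ordinal) = (βg g' : Ordinal) :=
      hF2 ξ h2 _ h1 _ h1' (h3.trans h3'.symm)
    exact hne (emb.injective (Subtype.ext (Subtype.ext this)))

/-- if `2^κ = κ⁺`, there is a strongly `𝓒`-independent family on `κ⁺`
of cardinality `κ`: every Boolean combination of length `< κ⁺` is stationary in `κ⁺`.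
Sign `false` means `I`, sign `true` means `κ⁺ ∖ I`. -/
theorem CH_implies_strongly_club_independent (κ : Cardinal.{0}) (hκ : ℵ₀ ≤ κ)
    (h2 : 2 ^ κ = Order.succ κ) :
    ∃ 𝓘 : Set (Set Ordinal.{0}), (∀ I ∈ 𝓘, I ⊆ Set.Iio (Order.succ κ).ord) ∧
      #𝓘 = Cardinal.lift.{1} κ ∧
      ∀ D ⊆ 𝓘, #D < Cardinal.lift.{1} (Order.succ κ) → ∀ f : Set Ordinal.{0} → Bool,
        IsStationaryIn (Set.Iio (Order.succ κ).ord ∩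
            ⋂ I ∈ D, (if f I then Set.Iio (Order.succ κ).ord \ I else I))
          (Order.succ κ).ord := by
  set o : Ordinal.{0} := (Order.succ κ).ord with ho
  set ι : Type := (κ.ord.ToType → Bool) with hι
  have hmkt : #κ.ord.ToType = κ := by rw [Cardinal.mk_toType, Cardinal.card_ord]
  have hmkι : #ι = Order.succ κ := by
    rw [hι, ← Cardinal.power_def, Cardinal.mk_bool, hmkt, h2]
  obtain ⟨S, hSstat, hSdisj⟩ := ulam_family κ hκ ι hmkι.le
  set I : κ.ord.ToType → Set Ordinal := fun α => {ξ | ∃ g : ι, g α = true ∧ ξ ∈ S g} with hI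
  have hIsub : ∀ α, I α ⊆ Set.Iio o := by
    rintro α ξ ⟨g, -, hg⟩
    exact (hSstat g).1 hg
  have hSmem : ∀ (g : ι) (α : κ.ord.ToType) (ξ : Ordinal), ξ ∈ S g → (ξ ∈ I α ↔ g α = true) := by
    intro g α ξ hξ
    constructor
    · rintro ⟨g', hg', hξ'⟩
      by_contra hne
      have : g ≠ g' := fun h => hne (h ▸ hg')
      exact Set.eq_empty_iff_forall_notMem.mp (hSdisj g g' this) ξ ⟨hξ, hξ'⟩
    · intro h
      exact ⟨g, h, hξ⟩
  have hSne : ∀ g : ι, (S g).Nonempty := by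
    intro g
    obtain ⟨x, hx, -⟩ := (hSstat g).2 (Set.Iio o) (isClubIn_Iio o)
    exact ⟨x, hx⟩
  have hIinj : Function.Injective I := by
    intro α α' heq
    by_contra hne
    set g : ι := fun β => decide (β = α) with hg
    have hgα : g α = true := by simp [hg]
    have hgα' : g α' = false := by simp [hg]; exact fun h => hne h.symm
    obtain ⟨ξ, hξ⟩ := hSne g
    have h1 : ξ ∈ I α := (hSmem g α ξ hξ).mpr hgα
    have h2 : ξ ∉ I α' := fun h => by
      rw [hSmem g α' ξ hξ] at h; rw [h] at hgα'; simp at hgα'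
    rw [heq] at h1
    exact h2 h1
  refine ⟨Set.range I, ?_, ?_, ?_⟩
  · rintro J ⟨α, rfl⟩
    exact hIsub α
  · have := Cardinal.mk_range_eq_of_injective hIinj
    rw [hmkt] at this
    simpa using this
  · intro D hD _ f
    set h : ι := fun α => !(f (I α)) with hh
    have hsub : S h ⊆ Set.Iio o ∩ ⋂ J ∈ D, (if f J then Set.Iio o \ J else J) := by
      intro ξ hξ
      refine ⟨(hSstat h).1 hξ, Set.mem_iInter₂.mpr fun J hJ => ?_⟩
      obtain ⟨α, rfl⟩ := hD hJ
      by_cases hf : f (I α) = true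
      · rw [if_pos hf]
        refine ⟨(hSstat h).1 hξ, fun hmem => ?_⟩
        have : h α = true := (hSmem h α ξ hξ).mp hmem
        rw [hh] at this
        simp [hf] at this
      · rw [if_neg hf]
        refine (hSmem h α ξ hξ).mpr ?_
        rw [hh]
        simp [Bool.not_eq_true] at hf ⊢
        exact hf
    exact (hSstat h).mono hsub Set.inter_subset_left
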